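/- Let W(r) = 1/r² − K₁(r)/r. Then W'(r) = −2/r³ − K₁'(r)/r + K₁(r)/r², and there exist constants such that |W'(r)| ≲ 1/r as r → 0⁺ and |W'(r)| ≲ 1/r³ as r → +∞. -/

import Mathlib

noncomputable section

open Filter Asymptotics MeasureTheory Real Set

-- basic pointwise facts
lemma exp_half_le_cosh (t : ℝ) : Real.exp t / 2 ≤ Real.cosh t := by
  rw [Real.cosh_eq]
  have := Real.exp_pos (-t)
  linarith

lemma cosh_le_exp_self {t : ℝ} (ht : 0 ≤ t) : Real.cosh t ≤ Real.exp t := by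
  rw [Real.cosh_eq]
  have h : Real.exp (-t) ≤ Real.exp t := Real.exp_le_exp.2 (by linarith)
  linarith

lemma tendsto_exp_lin_sub_cosh (r C : ℝ) (hr : 0 < r) :
    Tendsto (fun t : ℝ => Real.exp (C * t - r * Real.cosh t)) atTop (nhds 0) := by
  have h1 : Tendsto (fun t : ℝ => Real.exp ((C + 1) * t) * Real.exp (-(r/2) * Real.exp t))
      atTop (nhds 0) := by
    have h2 : Tendsto (fun x : ℝ => x ^ (C+1) * Real.exp (-(r/2) * x)) atTop (nhds 0) :=
      tendsto_rpow_mul_exp_neg_mul_atTop_nhds_zero (C+1) (r/2) (by linarith)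
    have h3 := h2.comp Real.tendsto_exp_atTop
    refine h3.congr' ?_
    filter_upwards [eventually_ge_atTop (0:ℝ)] with t _
    simp only [Function.comp]
    rw [← Real.exp_mul, mul_comm t (C+1)]
  refine squeeze_zero' (Eventually.of_forall fun t => (Real.exp_pos _).le) ?_ h1
  filter_upwards [eventually_ge_atTop (0:ℝ)] with t ht
  rw [← Real.exp_add]
  apply Real.exp_le_exp.2
  have h4 := exp_half_le_cosh t
  nlinarith [Real.exp_pos t]

lemma integrableOn_exp_lin_sub_cosh (r C : ℝ) (hr : 0 < r) :
    IntegrableOn (fun t : ℝ => Real.exp (C * t - r * Real.cosh t)) (Set.Ioi 0) := by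
  apply integrable_of_isBigO_exp_neg (one_pos) 
    (Continuous.continuousOn (by continuity))
  rw [isBigO_iff]
  refine ⟨1, ?_⟩
  have h := tendsto_exp_lin_sub_cosh r (C+1) hr
  have h2 := h.eventually (eventually_le_nhds (by norm_num : (0:ℝ) < 1))
  filter_upwards [h2] with t ht
  have : Real.exp (C * t - r * Real.cosh t) ≤ Real.exp (-t) := by
    have h3 : Real.exp ((C+1) * t - r * Real.cosh t) ≤ 1 := ht.trans (by norm_num)
    have h4 : Real.exp (C * t - r * Real.cosh t) = Real.exp ((C+1)*t - r*Real.cosh t) * Real.exp (-t) := by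
      rw [← Real.exp_add]; ring_nf
    rw [h4]
    nlinarith [Real.exp_pos (-t), Real.exp_pos ((C+1)*t - r*Real.cosh t)]
  simpa [abs_of_nonneg (Real.exp_pos _).le] using this

lemma integrableOn_of_le_exp_cosh {f : ℝ → ℝ} (hf : Continuous f) (r C : ℝ) (hr : 0 < r)
    (hb : ∀ t, 0 < t → |f t| ≤ Real.exp (C * t - r * Real.cosh t)) :
    IntegrableOn f (Set.Ioi 0) := by
  refine (integrableOn_exp_lin_sub_cosh r C hr).integrable.mono
    hf.aestronglyMeasurable.restrict ?_
  rw [ae_restrict_iff' measurableSet_Ioi]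
  filter_upwards with t ht
  rw [Real.norm_eq_abs, Real.norm_eq_abs, abs_of_nonneg (Real.exp_pos _).le]
  exact hb t ht

def besselK1 (r : ℝ) : ℝ :=
  ∫ t in Set.Ioi (0:ℝ), Real.exp (-r * Real.cosh t) * Real.cosh t

def Wfun (r : ℝ) : ℝ := 1 / r^2 - besselK1 r / r

def Jint (r : ℝ) : ℝ := ∫ t in Set.Ioi (0:ℝ), Real.exp (-r * Real.cosh t) * Real.cosh t ^ 2

def Mint (r : ℝ) : ℝ :=
  ∫ t in Set.Ioi (0:ℝ), Real.exp (-r * Real.cosh t) * (Real.sinh t ^ 2 * Real.cosh t)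

lemma sinh_le_cosh' (t : ℝ) : Real.sinh t ≤ Real.cosh t := by
  rw [Real.sinh_eq, Real.cosh_eq]
  have := Real.exp_pos (-t); linarith

lemma intA {r : ℝ} (hr : 0 < r) :
    IntegrableOn (fun t => Real.exp (-r * Real.cosh t) * Real.cosh t) (Set.Ioi 0) := by
  refine integrableOn_of_le_exp_cosh (by continuity) r 1 hr fun t ht => ?_
  have h1 := cosh_le_exp_self ht.le
  have h2 := Real.cosh_pos t
  rw [abs_of_nonneg (by positivity), show 1 * t - r * Real.cosh t = t + (-r * Real.cosh t) by ring,
    Real.exp_add]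
  exact mul_le_mul_of_nonneg_left h1 (Real.exp_pos _).le |>.trans_eq (mul_comm _ _)

lemma intB {r : ℝ} (hr : 0 < r) :
    IntegrableOn (fun t => Real.exp (-r * Real.cosh t) * Real.cosh t ^ 2) (Set.Ioi 0) := by
  refine integrableOn_of_le_exp_cosh (by continuity) r 2 hr fun t ht => ?_
  have h1 := cosh_le_exp_self ht.le
  have h2 := Real.cosh_pos t
  rw [abs_of_nonneg (by positivity), show 2 * t - r * Real.cosh t = (t + t) + (-r * Real.cosh t)
    by ring, Real.exp_add, Real.exp_add]
  have h3 : Real.cosh t * Real.cosh t ≤ Real.exp t * Real.exp t :=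
    mul_le_mul h1 h1 h2.le (Real.exp_pos t).le
  nlinarith [Real.exp_pos (-r * Real.cosh t), Real.exp_pos t]

lemma intM {r : ℝ} (hr : 0 < r) :
    IntegrableOn (fun t => Real.exp (-r * Real.cosh t) * (Real.sinh t ^ 2 * Real.cosh t))
      (Set.Ioi 0) := by
  refine integrableOn_of_le_exp_cosh (by continuity) r 3 hr fun t ht => ?_
  have h1 := cosh_le_exp_self ht.le
  have h2 := Real.cosh_pos t
  have h3 : 0 ≤ Real.sinh t := Real.sinh_nonneg_iff.2 ht.le
  have h4 := sinh_le_cosh' t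
  rw [abs_of_nonneg (by positivity), show 3 * t - r * Real.cosh t = (t + (t + t)) +
    (-r * Real.cosh t) by ring, Real.exp_add, Real.exp_add, Real.exp_add]
  have h5 : Real.sinh t * Real.sinh t ≤ Real.exp t * Real.exp t :=
    mul_le_mul (h4.trans h1) (h4.trans h1) h3 (Real.exp_pos t).le
  have h6 : Real.sinh t * Real.sinh t * Real.cosh t ≤ Real.exp t * Real.exp t * Real.exp t :=
    mul_le_mul h5 h1 h2.le (by positivity)
  nlinarith [Real.exp_pos (-r * Real.cosh t), Real.exp_pos t]

lemma hasDerivAt_besselK1 {r : ℝ} (hr : 0 < r) :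
    HasDerivAt besselK1 (-Jint r) r := by
  have key := hasDerivAt_integral_of_dominated_loc_of_deriv_le
    (μ := volume.restrict (Set.Ioi (0:ℝ)))
    (F := fun (x : ℝ) (t : ℝ) => Real.exp (-x * Real.cosh t) * Real.cosh t)
    (F' := fun (x : ℝ) (t : ℝ) => -(Real.exp (-x * Real.cosh t) * Real.cosh t ^ 2))
    (x₀ := r) (s := Metric.ball r (r/2))
    (bound := fun t => Real.exp (-(r/2) * Real.cosh t) * Real.cosh t ^ 2)
    (Metric.ball_mem_nhds r (by positivity))
    (Eventually.of_forall fun x => (Continuous.aestronglyMeasurable (by continuity)).restrict)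
    (intA hr).integrable
    (Continuous.aestronglyMeasurable (by continuity)).restrict
    (Eventually.of_forall fun t => ?_) (intB (by positivity : (0:ℝ) < r/2)).integrable
    (Eventually.of_forall fun t => ?_)
  · have h2 := key.2
    have : -Jint r = ∫ t in Set.Ioi (0:ℝ), -(Real.exp (-r * Real.cosh t) * Real.cosh t ^ 2) := by
      rw [integral_neg]; rfl
    rw [this]
    exact h2
  · intro x hx
    have hx2 : r/2 ≤ x := by
      have := abs_lt.1 (mem_ball_iff_norm.1 hx); linarith [this.1]
    have h2 := Real.cosh_pos t
    rw [norm_neg, Real.norm_eq_abs, abs_of_nonneg (by positivity)]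
    have : Real.exp (-x * Real.cosh t) ≤ Real.exp (-(r/2) * Real.cosh t) := by
      apply Real.exp_le_exp.2; nlinarith
    nlinarith [sq_nonneg (Real.cosh t)]
  · intro x _
    have hc : HasDerivAt (fun x : ℝ => -x * Real.cosh t) (-Real.cosh t) x := by
      simpa using ((hasDerivAt_id x).neg.mul_const (Real.cosh t))
    have := (hc.exp).mul_const (Real.cosh t)
    exact this.congr_deriv (by ring)

lemma key_identity {r : ℝ} (hr : 0 < r) :
    r^2 * Mint r = besselK1 r + r * Jint r := by
  set g : ℝ → ℝ := fun t => -(Real.exp (-r * Real.cosh t) *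
    (Real.sinh t * (1 + r * Real.cosh t))) with hg_def
  set g' : ℝ → ℝ := fun t => r^2 * (Real.exp (-r * Real.cosh t) * (Real.sinh t ^ 2 * Real.cosh t))
    - Real.exp (-r * Real.cosh t) * Real.cosh t
    - r * (Real.exp (-r * Real.cosh t) * Real.cosh t ^ 2) with hg'_def
  have hderiv : ∀ t : ℝ, HasDerivAt g (g' t) t := by
    intro t
    have hc : HasDerivAt (fun t : ℝ => -r * Real.cosh t) (-r * Real.sinh t) t :=
      (Real.hasDerivAt_cosh t).const_mul (-r)
    have hexp := hc.exp
    have hin : HasDerivAt (fun t : ℝ => Real.sinh t * (1 + r * Real.cosh t))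
        (Real.cosh t * (1 + r * Real.cosh t) + Real.sinh t * (r * Real.sinh t)) t :=
      (Real.hasDerivAt_sinh t).mul (((Real.hasDerivAt_cosh t).const_mul r).const_add 1)
    have := (hexp.mul hin).neg
    refine this.congr_deriv ?_
    have hsq := Real.cosh_sq t
    simp only [hg'_def]
    nlinarith [Real.exp_pos (-r * Real.cosh t)]
  have hint : IntegrableOn g' (Set.Ioi 0) :=
    (((intM hr).const_mul (r^2)).sub (intA hr)).sub ((intB hr).const_mul r)
  have htend : Tendsto g atTop (nhds 0) := by
    have t0 : Tendsto (fun t => Real.exp (1 * t - r * Real.cosh t)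
        + r * Real.exp (2 * t - r * Real.cosh t)) atTop (nhds 0) := by
      simpa using (tendsto_exp_lin_sub_cosh r 1 hr).add
        ((tendsto_exp_lin_sub_cosh r 2 hr).const_mul r)
    refine squeeze_zero_norm' ?_ t0
    · filter_upwards [eventually_ge_atTop (0:ℝ)] with t ht
      have h1 := cosh_le_exp_self ht
      have h2 := Real.cosh_pos t
      have h3 : 0 ≤ Real.sinh t := Real.sinh_nonneg_iff.2 ht
      have h4 := (sinh_le_cosh' t).trans h1
      have e1 : Real.exp (1 * t - r * Real.cosh t) = Real.exp t * Real.exp (-r * Real.cosh t) := by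
        rw [← Real.exp_add]; ring_nf
      have e2 : Real.exp (2 * t - r * Real.cosh t)
          = Real.exp t * Real.exp t * Real.exp (-r * Real.cosh t) := by
        rw [← Real.exp_add, ← Real.exp_add]; ring_nf
      rw [hg_def, norm_neg, Real.norm_eq_abs, abs_of_nonneg (by positivity), e1, e2]
      have h5 : Real.sinh t * Real.cosh t ≤ Real.exp t * Real.exp t :=
        mul_le_mul h4 h1 h2.le (Real.exp_pos t).le
      nlinarith [Real.exp_pos (-r * Real.cosh t), Real.exp_pos t,
        mul_le_mul_of_nonneg_left h4 (Real.exp_pos (-r * Real.cosh t)).le,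
        mul_le_mul_of_nonneg_left h5 (mul_nonneg hr.le (Real.exp_pos (-r * Real.cosh t)).le)]
  have hFTC := integral_Ioi_of_hasDerivAt_of_tendsto
    (Continuous.continuousWithinAt (by continuity))
    (fun x _ => hderiv x) hint htend
  have hg0 : g 0 = 0 := by simp [hg_def]
  rw [hg0, sub_zero] at hFTC
  have hsplit : ∫ t in Set.Ioi (0:ℝ), g' t
      = r^2 * Mint r - besselK1 r - r * Jint r := by
    have h1 : Integrable (fun t => r^2 * (Real.exp (-r * Real.cosh t) *
        (Real.sinh t ^ 2 * Real.cosh t)) - Real.exp (-r * Real.cosh t) * Real.cosh t)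
        (volume.restrict (Set.Ioi 0)) := ((intM hr).const_mul (r^2)).sub (intA hr)
    have h2 : Integrable (fun t => r * (Real.exp (-r * Real.cosh t) * Real.cosh t ^ 2))
        (volume.restrict (Set.Ioi 0)) := (intB hr).const_mul r
    have h3 : Integrable (fun t => r^2 * (Real.exp (-r * Real.cosh t) *
        (Real.sinh t ^ 2 * Real.cosh t))) (volume.restrict (Set.Ioi 0)) :=
      (intM hr).const_mul (r^2)
    rw [hg'_def]
    rw [integral_sub h1 h2, integral_sub h3 (intA hr), integral_const_mul, integral_const_mul]
    rfl
  rw [hsplit] at hFTC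
  linarith [hFTC]

lemma sqrt_one_add_sinh_sq (t : ℝ) : Real.sqrt (1 + Real.sinh t ^ 2) = Real.cosh t := by
  rw [show 1 + Real.sinh t ^ 2 = Real.cosh t ^ 2 by rw [Real.cosh_sq]; ring,
    Real.sqrt_sq (Real.cosh_pos t).le]

lemma Mint_eq (r : ℝ) :
    Mint r = ∫ s in Set.Ioi (0:ℝ), s^2 * Real.exp (-r * Real.sqrt (1 + s^2)) := by
  have himg : Real.sinh '' Set.Ioi 0 = Set.Ioi 0 := by
    ext y
    constructor
    · rintro ⟨x, hx, rfl⟩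
      exact Real.sinh_pos_iff.2 hx
    · intro hy
      exact ⟨Real.arsinh y, Real.arsinh_pos_iff.2 hy, Real.sinh_arsinh y⟩
  rw [show (∫ s in Set.Ioi (0:ℝ), s^2 * Real.exp (-r * Real.sqrt (1 + s^2)))
      = ∫ s in Real.sinh '' Set.Ioi 0, s^2 * Real.exp (-r * Real.sqrt (1 + s^2)) by rw [himg]]
  rw [integral_image_eq_integral_abs_deriv_smul measurableSet_Ioi
    (fun x _ => (Real.hasDerivAt_sinh x).hasDerivWithinAt) Real.sinh_injective.injOn]
  apply setIntegral_congr_fun measurableSet_Ioi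
  intro t _
  simp only [smul_eq_mul, sqrt_one_add_sinh_sq, abs_of_pos (Real.cosh_pos t)]
  ring

lemma intSq {r : ℝ} (hr : 0 < r) :
    IntegrableOn (fun s : ℝ => s^2 * Real.exp (-r * s)) (Set.Ioi 0) := by
  have := integrableOn_rpow_mul_exp_neg_mul_rpow (s := 2) (p := 1)
    (by norm_num) (by norm_num) hr
  refine this.congr_fun (fun x hx => ?_) measurableSet_Ioi
  simp only [Real.rpow_one, Real.rpow_two]

lemma intLin {r : ℝ} (hr : 0 < r) :
    IntegrableOn (fun s : ℝ => s * Real.exp (-r * s)) (Set.Ioi 0) := by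
  have := integrableOn_rpow_mul_exp_neg_mul_rpow (s := 1) (p := 1)
    (by norm_num) (by norm_num) hr
  refine this.congr_fun (fun x hx => ?_) measurableSet_Ioi
  simp [Real.rpow_one]

lemma self_le_sqrt_one_add_sq {s : ℝ} (hs : 0 ≤ s) : s ≤ Real.sqrt (1 + s^2) := by
  exact Real.le_sqrt_of_sq_le (by nlinarith)

lemma intSqrt {r : ℝ} (hr : 0 < r) :
    IntegrableOn (fun s : ℝ => s^2 * Real.exp (-r * Real.sqrt (1 + s^2))) (Set.Ioi 0) := by
  refine (intSq hr).integrable.mono (Continuous.aestronglyMeasurable (by continuity)).restrict ?_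
  rw [ae_restrict_iff' measurableSet_Ioi]
  filter_upwards with s hs
  rw [Real.norm_eq_abs, Real.norm_eq_abs, abs_of_nonneg (by positivity),
    abs_of_nonneg (by positivity)]
  have h1 := self_le_sqrt_one_add_sq hs.le
  have : Real.exp (-r * Real.sqrt (1 + s^2)) ≤ Real.exp (-r * s) :=
    Real.exp_le_exp.2 (by nlinarith)
  nlinarith [sq_nonneg s]

lemma integral_sq_exp {r : ℝ} (hr : 0 < r) :
    ∫ s in Set.Ioi (0:ℝ), s^2 * Real.exp (-r * s) = 2 / r^3 := by
  have := Real.integral_rpow_mul_exp_neg_mul_Ioi (a := 3) (by norm_num) hr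
  rw [show (∫ t in Set.Ioi (0:ℝ), t ^ ((3:ℝ) - 1) * Real.exp (-(r * t)))
      = ∫ s in Set.Ioi (0:ℝ), s^2 * Real.exp (-r * s) from
    setIntegral_congr_fun measurableSet_Ioi fun x hx => by
      rw [show (3:ℝ) - 1 = 2 by norm_num, Real.rpow_two, neg_mul]] at this
  rw [this, show (3:ℝ) = ((2:ℕ) : ℝ) + 1 by norm_num, Real.Gamma_nat_eq_factorial]
  rw [show ((Nat.factorial 2 : ℕ) : ℝ) = 2 by norm_num [Nat.factorial]]
  rw [show (((2:ℕ):ℝ)) + 1 = ((3:ℕ):ℝ) by norm_num, Real.rpow_natCast, div_pow, one_pow]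
  field_simp

lemma integral_lin_exp {r : ℝ} (hr : 0 < r) :
    ∫ s in Set.Ioi (0:ℝ), s * Real.exp (-r * s) = 1 / r^2 := by
  have := Real.integral_rpow_mul_exp_neg_mul_Ioi (a := 2) (by norm_num) hr
  rw [show (∫ t in Set.Ioi (0:ℝ), t ^ ((2:ℝ) - 1) * Real.exp (-(r * t)))
      = ∫ s in Set.Ioi (0:ℝ), s * Real.exp (-r * s) from
    setIntegral_congr_fun measurableSet_Ioi fun x hx => by
      rw [show (2:ℝ) - 1 = 1 by norm_num, Real.rpow_one, neg_mul]] at this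
  rw [this, show (2:ℝ) = ((1:ℕ) : ℝ) + 1 by norm_num, Real.Gamma_nat_eq_factorial]
  rw [show ((Nat.factorial 1 : ℕ) : ℝ) = 1 by norm_num [Nat.factorial]]
  rw [show (((1:ℕ):ℝ)) + 1 = ((2:ℕ):ℝ) by norm_num, Real.rpow_natCast, div_pow, one_pow]
  norm_num

lemma hasDerivAt_Wfun {r : ℝ} (hr : 0 < r) :
    HasDerivAt Wfun (-2/r^3 - (-Jint r) / r + besselK1 r / r^2) r := by
  have h0 : HasDerivAt (fun x : ℝ => x^2) (2*r) r := by
    simpa using hasDerivAt_pow 2 r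
  have h1 : HasDerivAt (fun x : ℝ => 1 / x^2) (-(2*r) / (r^2)^2) r := by
    simpa only [one_div, Pi.inv_def] using h0.inv (by positivity)
  have h2 : HasDerivAt (fun x : ℝ => besselK1 x / x)
      (((-Jint r) * r - besselK1 r * 1) / r^2) r :=
    (hasDerivAt_besselK1 hr).div (hasDerivAt_id r) hr.ne'
  have h3 := h1.sub h2
  have : -(2*r) / (r^2)^2 - ((-Jint r) * r - besselK1 r * 1) / r^2
      = -2/r^3 - (-Jint r) / r + besselK1 r / r^2 := by
    field_simp
    ring
  rw [this] at h3
  exact h3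

lemma deriv_Wfun_eq {r : ℝ} (hr : 0 < r) :
    deriv Wfun r = Mint r - 2/r^3 := by
  have hk := key_identity hr
  have hM : Mint r = besselK1 r / r^2 + Jint r / r := by
    have h : r^2 * Mint r = r^2 * (besselK1 r / r^2 + Jint r / r) := by
      rw [hk]; field_simp
    exact mul_left_cancel₀ (pow_ne_zero 2 hr.ne') h
  rw [(hasDerivAt_Wfun hr).deriv, hM]
  ring

lemma Mint_le {r : ℝ} (hr : 0 < r) : Mint r ≤ 2/r^3 := by
  rw [Mint_eq, ← integral_sq_exp hr]
  apply setIntegral_mono_on (intSqrt hr) (intSq hr) measurableSet_Ioi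
  intro s hs
  have h1 := self_le_sqrt_one_add_sq (le_of_lt hs)
  have : Real.exp (-r * Real.sqrt (1 + s^2)) ≤ Real.exp (-r * s) :=
    Real.exp_le_exp.2 (by nlinarith)
  nlinarith [sq_nonneg s]

lemma Mint_nonneg {r : ℝ} (hr : 0 < r) : 0 ≤ Mint r := by
  rw [Mint_eq]
  apply setIntegral_nonneg measurableSet_Ioi
  intro s _
  positivity

lemma Mint_ge {r : ℝ} (hr : 0 < r) : 2/r^3 - Mint r ≤ 1/(2*r) := by
  have key : (∫ s in Set.Ioi (0:ℝ), (s^2 * Real.exp (-r * s)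
      - s^2 * Real.exp (-r * Real.sqrt (1 + s^2)))) ≤ r/2 * (1/r^2) := by
    rw [← integral_lin_exp hr, ← integral_const_mul]
    apply setIntegral_mono_on ((intSq hr).sub (intSqrt hr)) ((intLin hr).const_mul (r/2))
      measurableSet_Ioi
    intro s hs
    have hs0 : (0:ℝ) < s := hs
    set S := Real.sqrt (1 + s^2) with hS
    have hS1 : s ≤ S := self_le_sqrt_one_add_sq hs.le
    have hS2 : S ≤ s + 1/(2*s) := by
      rw [hS]
      have h : Real.sqrt (1 + s^2) ≤ Real.sqrt ((s + 1/(2*s))^2) := by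
        apply Real.sqrt_le_sqrt
        have : (s + 1/(2*s))^2 = s^2 + 1 + 1/(4*s^2) := by field_simp; ring
        rw [this]
        have : 0 < 1/(4*s^2) := by positivity
        linarith
      rwa [Real.sqrt_sq (by positivity)] at h
    have h5 : Real.exp (-r*s) - Real.exp (-r*S) ≤ Real.exp (-r*s) * (r * (S - s)) := by
      have ha := Real.add_one_le_exp (-(r*(S-s)))
      have hE : Real.exp (-r*S) = Real.exp (-r*s) * Real.exp (-(r*(S-s))) := by
        rw [← Real.exp_add]; ring_nf
      nlinarith [Real.exp_pos (-r*s)]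
    have h6 : r * (S - s) ≤ r * (1/(2*s)) := by
      apply mul_le_mul_of_nonneg_left _ hr.le
      linarith
    have h7 : s^2 * (Real.exp (-r*s) - Real.exp (-r*S)) ≤ s^2 * (Real.exp (-r*s) * (r * (1/(2*s)))) := by
      apply mul_le_mul_of_nonneg_left _ (sq_nonneg s)
      refine h5.trans ?_
      exact mul_le_mul_of_nonneg_left h6 (Real.exp_pos _).le
    have h8 : s^2 * (Real.exp (-r*s) * (r * (1/(2*s)))) = r/2 * (s * Real.exp (-r*s)) := by
      field_simp
    calc s^2 * Real.exp (-r*s) - s^2 * Real.exp (-r*S)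
        = s^2 * (Real.exp (-r*s) - Real.exp (-r*S)) := by ring
      _ ≤ r/2 * (s * Real.exp (-r*s)) := by rw [← h8]; exact h7
  have hsplit : (∫ s in Set.Ioi (0:ℝ), (s^2 * Real.exp (-r * s)
      - s^2 * Real.exp (-r * Real.sqrt (1 + s^2)))) = 2/r^3 - Mint r := by
    rw [integral_sub (intSq hr) (intSqrt hr), integral_sq_exp hr, ← Mint_eq]
  rw [hsplit] at key
  calc 2/r^3 - Mint r ≤ r/2 * (1/r^2) := key
    _ = 1/(2*r) := by field_simp

theorem W_deriv_formula_and_bounds :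
    (∀ r : ℝ, 0 < r →
        deriv Wfun r = -2/r^3 - deriv besselK1 r / r + besselK1 r / r^2) ∧
    (deriv Wfun) =O[nhdsWithin 0 (Set.Ioi 0)] (fun r : ℝ => 1/r) ∧
    (deriv Wfun) =O[atTop] (fun r : ℝ => 1/r^3) := by
  refine ⟨fun r hr => ?_, ?_, ?_⟩
  · rw [(hasDerivAt_Wfun hr).deriv, (hasDerivAt_besselK1 hr).deriv]
  · rw [isBigO_iff]
    refine ⟨1/2, ?_⟩
    filter_upwards [self_mem_nhdsWithin] with r hr
    rw [Set.mem_Ioi] at hr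
    rw [deriv_Wfun_eq hr, Real.norm_eq_abs, Real.norm_eq_abs,
      abs_of_nonpos (by linarith [Mint_le hr]), abs_of_nonneg (by positivity)]
    have := Mint_ge hr
    have h2 : (1:ℝ)/2 * (1/r) = 1/(2*r) := by field_simp
    linarith [h2]
  · rw [isBigO_iff]
    refine ⟨2, ?_⟩
    filter_upwards [eventually_gt_atTop (0:ℝ)] with r hr
    rw [deriv_Wfun_eq hr, Real.norm_eq_abs, Real.norm_eq_abs,
      abs_of_nonpos (by linarith [Mint_le hr]), abs_of_nonneg (by positivity)]
    have := Mint_nonneg hr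
    have h2 : (2:ℝ) * (1/r^3) = 2/r^3 := by field_simp
    linarith [h2]
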